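/- Let c be a positive real number such that c^N ∈ ℚ for some positive integer N and c ∉ ℚ. Let s be the smallest positive integer with c^s ∈ ℚ, and set k = c^s. Then the minimal polynomial of c over ℚ is X^s − k. -/

import Mathlib

open Polynomial

theorem minpoly_of_min_power_rational (c : ℝ) (hc : 0 < c)
    (N : ℕ) (hN : 0 < N) (hcN : ∃ r : ℚ, c ^ N = (r : ℝ))
    (hirr : Irrational c)
    (s : ℕ) (hs : 0 < s) (k : ℚ) (hk : c ^ s = (k : ℝ))
    (hmin : ∀ n : ℕ, 0 < n → (∃ r : ℚ, c ^ n = (r : ℝ)) → s ≤ n) :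
    minpoly ℚ c = X ^ s - C k := by
  have hq : Monic (X ^ s - C k : ℚ[X]) := monic_X_pow_sub_C k hs.ne'
  have haev : (Polynomial.aeval c) ((X : ℚ[X]) ^ s - C k) = 0 := by
    simp [hk]
  have hint : IsIntegral ℚ c := ⟨_, hq, haev⟩
  have hdvd : minpoly ℚ c ∣ X ^ s - C k := minpoly.dvd ℚ c haev
  set p := minpoly ℚ c with hp
  have hpm : p.Monic := minpoly.monic hint
  set d := p.natDegree with hd
  have hdpos : 0 < d := minpoly.natDegree_pos hint
  set P := p.map (algebraMap ℚ ℂ) with hP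
  have hPm : P.Monic := hpm.map _
  have hsplit : P.Splits := IsAlgClosed.splits P
  have hdvdC : P ∣ (X ^ s - C (k : ℂ)) := by
    have := Polynomial.map_dvd (algebraMap ℚ ℂ) hdvd
    simpa using this
  have hroot_abs : ∀ z ∈ P.roots, ‖z‖ = c := by
    intro z hz
    have hz0 : P.eval z = 0 := (mem_roots hPm.ne_zero).1 hz
    have hzs : z ^ s = (k : ℂ) := by
      have h0 := eval_eq_zero_of_dvd_of_eval_eq_zero hdvdC hz0
      simp at h0
      linear_combination h0
    have hkc : ((k : ℝ) : ℂ) = (k : ℂ) := by push_cast; ring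
    have habs : ‖z‖ ^ s = c ^ s := by
      rw [← norm_pow, hzs, ← hkc, Complex.norm_real, Real.norm_eq_abs, abs_of_pos (hk ▸ pow_pos hc s), hk]
    exact (pow_left_inj₀ (norm_nonneg z) hc.le hs.ne').1 habs
  have hcard : Multiset.card P.roots = d := by
    have := (splits_iff_card_roots).1 hsplit
    rwa [natDegree_map] at this
  have hc0 : P.coeff 0 = (-1) ^ P.natDegree * P.roots.prod :=
    hsplit.coeff_zero_eq_prod_roots_of_monic hPm
  have habs0 : ‖P.coeff 0‖ = c ^ d := by
    rw [hc0, norm_mul, norm_pow, norm_neg, norm_one, one_pow, one_mul]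
    have hprod : ‖P.roots.prod‖ = (Multiset.map (fun z : ℂ => ‖z‖) P.roots).prod :=
      map_multiset_prod (normHom : ℂ →*₀ ℝ) P.roots
    rw [hprod]
    have hrep : Multiset.map (fun z : ℂ => ‖z‖) P.roots = Multiset.replicate d c := by
      rw [Multiset.eq_replicate]
      refine ⟨by simp [hcard], ?_⟩
      intro x hx
      obtain ⟨z, hz, rfl⟩ := Multiset.mem_map.1 hx
      exact hroot_abs z hz
    rw [hrep, Multiset.prod_replicate]
  have hcoeff : P.coeff 0 = ((p.coeff 0 : ℚ) : ℂ) := by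
    rw [hP, coeff_map]; rfl
  have hcd : c ^ d = ((|p.coeff 0| : ℚ) : ℝ) := by
    have : ‖(((p.coeff 0 : ℝ)) : ℂ)‖ = c ^ d := by
      rw [← habs0, hcoeff]; norm_cast
      rw [← Rat.norm_cast_real, Real.norm_eq_abs, Rat.cast_abs]
    rw [Complex.norm_real, Real.norm_eq_abs] at this
    rw [← this]; push_cast; ring
  have hsd : s ≤ d := hmin d hdpos ⟨|p.coeff 0|, hcd⟩
  have hds : (X ^ s - C k : ℚ[X]).natDegree ≤ d := by
    rw [natDegree_X_pow_sub_C]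
    exact hsd
  exact (eq_of_monic_of_dvd_of_natDegree_le hpm hq hdvd hds).symm
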